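/- For y > 0 define G(y) = 2y² ∑_{m=0}^∞ 1/(y+m)² − 2y − 1. Then G is non-increasing on (0, 1]: for 0 < y ≤ 1, G'(y) = 4y ∑_{m ≥ 1} m/(y+m)³ − 2 ≤ 0. -/

import Mathlib

open Real Set

/-- Vaaler's function `G(y) = 2y² ∑_{m≥0} (y+m)^{-2} - 2y - 1`. -/
noncomputable def vaalerG (y : ℝ) : ℝ :=
  2 * y ^ 2 * (∑' m : ℕ, 1 / (y + m) ^ 2) - 2 * y - 1


noncomputable def vaalerF (y t : ℝ) : ℝ := -(1 / (y + t)) + y / (2 * (y + t) ^ 2)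

lemma key_step {y : ℝ} (hy : 0 < y) (hy1 : y ≤ 1) (n : ℕ) :
    ((n : ℝ) + 1) / (y + ((n : ℝ) + 1)) ^ 3 ≤ vaalerF y (n + 1) - vaalerF y n := by
  set a : ℝ := y + n with ha
  have ha0 : 0 < a := by positivity
  have hay : y ≤ a := le_add_of_nonneg_right (by positivity)
  have hEq : vaalerF y (n + 1) - vaalerF y n - ((n : ℝ) + 1) / (y + ((n : ℝ) + 1)) ^ 3
      = ((a - y) + a * (1 - y) + 2 * a * (a - y)) / (2 * a ^ 2 * (a + 1) ^ 3) := by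
    unfold vaalerF
    have h1 : y + ((n : ℝ) + 1) = a + 1 := by rw [ha]; ring
    have h2 : (n : ℝ) = a - y := by rw [ha]; ring
    have h3 : y + (a - y) = a := by ring
    rw [h1, h2, h3]
    field_simp
    ring
  have hnum : (0:ℝ) ≤ (a - y) + a * (1 - y) + 2 * a * (a - y) := by
    have h1 : (0:ℝ) ≤ a * (1 - y) := mul_nonneg ha0.le (by linarith)
    have h2 : (0:ℝ) ≤ a * (a - y) := mul_nonneg ha0.le (by linarith)
    linarith
  have : (0:ℝ) ≤ ((a - y) + a * (1 - y) + 2 * a * (a - y)) / (2 * a ^ 2 * (a + 1) ^ 3) :=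
    div_nonneg hnum (by positivity)
  linarith [hEq ▸ this]

lemma vaalerF_zero {y : ℝ} (hy : 0 < y) : vaalerF y 0 = -(1 / (2 * y)) := by
  unfold vaalerF
  field_simp
  ring

lemma partial_sum_le {y : ℝ} (hy : 0 < y) (hy1 : y ≤ 1) (n : ℕ) :
    ∑ i ∈ Finset.range n, ((i : ℝ) + 1) / (y + ((i : ℝ) + 1)) ^ 3 ≤ 1 / (2 * y) + vaalerF y n := by
  induction n with
  | zero => simp [vaalerF_zero hy]
  | succ n ih =>
    rw [Finset.sum_range_succ]
    have := key_step hy hy1 n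
    push_cast
    linarith

lemma vaalerF_nonpos {y : ℝ} (hy : 0 < y) (n : ℕ) : vaalerF y n ≤ 0 := by
  unfold vaalerF
  have h : (0:ℝ) < y + n := by positivity
  have h2 : y / (2 * (y + n) ^ 2) ≤ 1 / (y + n) := by
    rw [div_le_div_iff₀ (by positivity) h]
    nlinarith
  linarith

lemma tsum_le {y : ℝ} (hy : 0 < y) (hy1 : y ≤ 1) :
    (∑' m : ℕ, ((m : ℝ) + 1) / (y + ((m : ℝ) + 1)) ^ 3) ≤ 1 / (2 * y) := by
  apply Real.tsum_le_of_sum_range_le (fun n => by positivity)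
  intro n
  calc ∑ i ∈ Finset.range n, ((i : ℝ) + 1) / (y + ((i : ℝ) + 1)) ^ 3
      ≤ 1 / (2 * y) + vaalerF y n := partial_sum_le hy hy1 n
    _ ≤ 1 / (2 * y) := by linarith [vaalerF_nonpos hy n]


lemma summable_aux {c : ℝ} (hc : 0 < c) {p : ℕ} (hp : 2 ≤ p) :
    Summable (fun n : ℕ => 1 / (c + n) ^ p) := by
  rw [← summable_nat_add_iff 1]
  have h0 : Summable (fun n : ℕ => 1 / ((n : ℝ) + 1) ^ p) := by
    have := (summable_nat_add_iff (f := fun n : ℕ => 1 / (n : ℝ) ^ p) 1).2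
      (summable_one_div_nat_pow.2 (by omega))
    exact this.congr (by intro n; push_cast; ring_nf)
  refine Summable.of_nonneg_of_le (fun n => by positivity) (fun n => ?_) h0
  apply one_div_le_one_div_of_le (by positivity)
  apply pow_le_pow_left₀ (by positivity)
  push_cast
  linarith


lemma deriv_term {n : ℕ} {z : ℝ} (hz : 0 < z) :
    HasDerivAt (fun w : ℝ => 1 / (w + n) ^ 2) (-2 * (1 / (z + n) ^ 3)) z := by
  have h0 : (0:ℝ) < z + n := by positivity
  have h := (((hasDerivAt_id z).add_const (n:ℝ)).pow 2).inv (pow_ne_zero 2 h0.ne')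
  simp only [id_eq, ← one_div] at h
  have hf : (1 / (fun x : ℝ => x + (n:ℝ)) ^ 2) = fun w : ℝ => 1 / (w + n) ^ 2 := by
    funext w; simp
  rw [hf] at h
  refine h.congr_deriv ?_
  simp only [Pi.pow_apply]
  norm_num
  field_simp

lemma hasDeriv_main {y : ℝ} (hy : 0 < y) (hy1 : y ≤ 1) :
    HasDerivAt vaalerG
      (4 * y * (∑' m : ℕ, ((m : ℝ) + 1) / (y + ((m : ℝ) + 1)) ^ 3) - 2) y := by
  set c : ℝ := y / 2 with hc
  have hc0 : 0 < c := by positivity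
  have hu : Summable (fun n : ℕ => 2 * (1 / (c + n) ^ 3)) :=
    (summable_aux hc0 (by norm_num)).mul_left 2
  have hS2 : Summable (fun m : ℕ => 1 / (y + m) ^ 2) := summable_aux hy (by norm_num)
  have hT : Summable (fun m : ℕ => 1 / (y + m) ^ 3) := summable_aux hy (by norm_num)
  have hmem : y ∈ Ioo c 2 := ⟨by linarith, by linarith⟩
  have hS : HasDerivAt (fun z : ℝ => ∑' n : ℕ, 1 / (z + n) ^ 2)
      (∑' n : ℕ, -2 * (1 / (y + n) ^ 3)) y := by
    apply hasDerivAt_tsum_of_isPreconnected (u := fun n : ℕ => 2 * (1 / (c + n) ^ 3))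
      (g := fun (n : ℕ) (z : ℝ) => 1 / (z + n) ^ 2)
      (g' := fun (n : ℕ) (z : ℝ) => -2 * (1 / (z + n) ^ 3))
      hu isOpen_Ioo (convex_Ioo c 2).isPreconnected
      (fun n z hz => deriv_term (lt_trans hc0 hz.1)) (fun n z hz => ?_) hmem hS2 hmem
    have hz0 : c < z := hz.1
    have h1 : (0:ℝ) < c + n := by positivity
    have h2 : (0:ℝ) < z + n := by linarith
    have habs : ‖(-2 : ℝ) * (1 / (z + n) ^ 3)‖ = 2 * (1 / (z + n) ^ 3) := by
      rw [norm_mul]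
      norm_num [abs_of_nonneg (by positivity : (0:ℝ) ≤ 1 / (z + n) ^ 3)]
      rw [abs_of_pos h2]
    rw [habs]
    have : (1:ℝ) / (z + n) ^ 3 ≤ 1 / (c + n) ^ 3 := by
      apply one_div_le_one_div_of_le (by positivity)
      apply pow_le_pow_left₀ h1.le (by linarith)
    linarith
  have hG := ((((hasDerivAt_pow 2 y).const_mul 2).mul hS).sub
      ((hasDerivAt_id y).const_mul 2)).sub_const 1
  simp only [id_eq] at hG
  have hG2 : HasDerivAt vaalerG
      (2 * ((2:ℕ) * y ^ (2 - 1)) * (∑' m : ℕ, 1 / (y + m) ^ 2)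
        + 2 * y ^ 2 * (∑' n : ℕ, -2 * (1 / (y + n) ^ 3)) - 2 * 1) y := hG
  convert hG2 using 1
  -- value identity
  have hyT : Summable (fun m : ℕ => y * (1 / (y + m) ^ 3)) := hT.mul_left y
  have hsum_m : Summable (fun m : ℕ => (m : ℝ) / (y + m) ^ 3) := by
    refine Summable.of_nonneg_of_le (fun n => by positivity) (fun n => ?_) hS2
    have h0 : (0:ℝ) < y + n := by positivity
    rw [div_le_div_iff₀ (by positivity) (by positivity)]
    have : (n:ℝ) ≤ y + n := by linarith
    nlinarith [pow_pos h0 2, pow_pos h0 3]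
  have key : (∑' m : ℕ, 1 / (y + m) ^ 2) - y * (∑' m : ℕ, 1 / (y + m) ^ 3)
      = ∑' m : ℕ, ((m : ℝ) + 1) / (y + ((m : ℝ) + 1)) ^ 3 := by
    rw [← tsum_mul_left, ← hS2.tsum_sub hyT]
    have step : ∀ m : ℕ, 1 / (y + m) ^ 2 - y * (1 / (y + m) ^ 3) = (m : ℝ) / (y + m) ^ 3 := by
      intro m
      have h0 : (0:ℝ) < y + m := by positivity
      field_simp
      ring
    rw [tsum_congr step, hsum_m.tsum_eq_zero_add]
    push_cast
    simp
  rw [← key, tsum_mul_left]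
  ring

lemma deriv_val_nonpos {y : ℝ} (hy : 0 < y) (hy1 : y ≤ 1) :
    4 * y * (∑' m : ℕ, ((m : ℝ) + 1) / (y + ((m : ℝ) + 1)) ^ 3) - 2 ≤ 0 := by
  have h := tsum_le hy hy1
  have h4 : (0:ℝ) < 4 * y := by linarith
  have : 4 * y * (∑' m : ℕ, ((m : ℝ) + 1) / (y + ((m : ℝ) + 1)) ^ 3) ≤ 4 * y * (1 / (2 * y)) :=
    mul_le_mul_of_nonneg_left h h4.le
  have heq : 4 * y * (1 / (2 * y)) = 2 := by field_simp; ring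
  linarith

/-- `G` is non-increasing on `(0,1]`; indeed for `0 < y ≤ 1`,
`G'(y) = 4y ∑_{m ≥ 1} m/(y+m)³ - 2 ≤ 0`. -/
theorem vaalerG_antitone :
    AntitoneOn vaalerG (Set.Ioc (0:ℝ) 1) ∧
    ∀ y ∈ Set.Ioc (0:ℝ) 1,
      HasDerivAt vaalerG
        (4 * y * (∑' m : ℕ, ((m : ℝ) + 1) / (y + ((m : ℝ) + 1)) ^ 3) - 2) y ∧
      4 * y * (∑' m : ℕ, ((m : ℝ) + 1) / (y + ((m : ℝ) + 1)) ^ 3) - 2 ≤ 0 := by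
  constructor
  · apply antitoneOn_of_deriv_nonpos (convex_Ioc 0 1)
    · exact fun y hy => (hasDeriv_main hy.1 hy.2).continuousAt.continuousWithinAt
    · intro y hy
      rw [interior_Ioc] at hy
      exact (hasDeriv_main hy.1 hy.2.le).differentiableAt.differentiableWithinAt
    · intro y hy
      rw [interior_Ioc] at hy
      rw [(hasDeriv_main hy.1 hy.2.le).deriv]
      exact deriv_val_nonpos hy.1 hy.2.le
  · exact fun y hy => ⟨hasDeriv_main hy.1 hy.2, deriv_val_nonpos hy.1 hy.2⟩
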